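/- Let p be a prime number, N ≥ 1, and work in R = ℤ[c]/(c^{N+1}) with θ = Σ_{i=0}^{p-1} (1-c)^{-i}. Then in ℤ[1/p] ⊗ R, the inverse θ^{-1} can be written as θ^{-1} = Σ_{k=0}^{⌊N/(p-1)⌋} p^{-1-k} ⊗ e_k with e_k ∈ c^{k(p-1)}·R, and moreover p^{1+⌊N/(p-1)⌋}·θ^{-1} lies in the image of R → ℤ[1/p] ⊗ R. -/

import Mathlib

lemma geom_binom {R : Type*} [CommRing R] (v : R) (n : ℕ) :
    ∑ i ∈ Finset.range n, (1 + v) ^ i =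
      ∑ j ∈ Finset.range n, (n.choose (j + 1) : R) * v ^ j := by
  induction n with
  | zero => simp
  | succ n ih =>
    rw [Finset.sum_range_succ, ih]
    have h1 : ((1 : R) + v) ^ n = ∑ j ∈ Finset.range (n + 1), (n.choose j : R) * v ^ j := by
      rw [add_comm, add_pow]
      exact Finset.sum_congr rfl fun j hj => by ring
    have h2 : ∑ j ∈ Finset.range (n + 1), (n.choose (j + 1) : R) * v ^ j
        = ∑ j ∈ Finset.range n, (n.choose (j + 1) : R) * v ^ j := by
      rw [Finset.sum_range_succ, Nat.choose_succ_self]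
      simp
    simp only [Nat.choose_succ_succ, Nat.cast_add, add_mul, Finset.sum_add_distrib]
    rw [h2, h1]
    ring

/-- The truncated polynomial ring `ℤ[c]/(c^(N+1))`. -/
abbrev BottRing (N : ℕ) : Type :=
  Polynomial ℤ ⧸ Ideal.span {(Polynomial.X : Polynomial ℤ) ^ (N + 1)}

noncomputable def bottC (N : ℕ) : BottRing N :=
  Ideal.Quotient.mk _ Polynomial.X

/-- The Bott class `θ = Σ_{i=0}^{p-1} (1-c)^(-i)` in `ℤ[c]/(c^(N+1))`. -/
noncomputable def bottTheta (p N : ℕ) : BottRing N :=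
  ∑ i ∈ Finset.range p, Ring.inverse (1 - bottC N) ^ i

set_option maxHeartbeats 1000000 in
/-- One-variable model of the Bott class decomposition: with `m = ⌊N/(p-1)⌋`,
`θ⁻¹ = Σ_{k=0}^{m} p^(-1-k) ⊗ e_k` in `ℤ[1/p] ⊗ R` (stated after multiplying
through by `p^(m+1)`), where `e_k ∈ c^(k(p-1))·R`; in particular
`p^(1+m)·θ⁻¹` lies in the image of `R → ℤ[1/p] ⊗ R`. -/
theorem stmt13 (p N : ℕ) (hp : p.Prime) (hN : 1 ≤ N) :
    ∃ e : ℕ → BottRing N,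
      (∀ k ≤ N / (p - 1), e k ∈ Ideal.span {bottC N ^ (k * (p - 1))}) ∧
      (algebraMap (BottRing N) (Localization.Away ((p : BottRing N))) (bottTheta p N) *
        (∑ k ∈ Finset.range (N / (p - 1) + 1),
          (p : Localization.Away ((p : BottRing N))) ^ (N / (p - 1) - k) *
            algebraMap (BottRing N) (Localization.Away ((p : BottRing N))) (e k))
        = (p : Localization.Away ((p : BottRing N))) ^ (N / (p - 1) + 1)) ∧
      ∃ r : BottRing N,
        algebraMap (BottRing N) (Localization.Away ((p : BottRing N))) (bottTheta p N) *
          algebraMap (BottRing N) (Localization.Away ((p : BottRing N))) r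
          = (p : Localization.Away ((p : BottRing N))) ^ (N / (p - 1) + 1) := by
  classical
  have hp2 : 2 ≤ p := hp.two_le
  set R := BottRing N
  set m := N / (p - 1) with hm
  set q := p - 1 with hq
  have hpq : p = q + 1 := by omega
  set c := bottC N with hcdef
  -- nilpotency of c
  have hc0 : c ^ (N + 1) = 0 := by
    rw [hcdef, bottC, ← map_pow, Ideal.Quotient.eq_zero_iff_mem]
    exact Ideal.subset_span rfl
  have hcnil : IsNilpotent c := ⟨N + 1, hc0⟩
  have hu : IsUnit (1 - c) := hcnil.isUnit_one_sub
  set t := Ring.inverse (1 - c) with hT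
  have ht : (1 - c) * t = 1 := Ring.mul_inverse_cancel _ hu
  set v := t - 1 with hV
  have htv : t = 1 + v := by rw [hV]; ring
  have hvc : v = c * t := by linear_combination ht
  have hvnil : IsNilpotent v := by
    rw [hvc]; exact (Commute.all c t).isNilpotent_mul_right hcnil
  have hvpow : ∀ K, N + 1 ≤ K → v ^ K = 0 := by
    intro K hK
    obtain ⟨d, rfl⟩ := Nat.exists_eq_add_of_le hK
    have hcK : c ^ (N + 1 + d) = 0 := by rw [pow_add, hc0, zero_mul]
    rw [hvc, mul_pow, hcK, zero_mul]
  have hqpos : 0 < q := by omega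
  have hmN : N + 1 ≤ q * (m + 1) := by
    have h := (Nat.div_lt_iff_lt_mul hqpos).mp (Nat.lt_succ_self m)
    calc N + 1 ≤ (m + 1) * q := h
      _ = q * (m + 1) := mul_comm _ _
  -- theta as binomial sum in v
  have htheta : bottTheta p N = ∑ j ∈ Finset.range p, (p.choose (j + 1) : R) * v ^ j := by
    rw [bottTheta, ← geom_binom]
    exact Finset.sum_congr rfl fun i _ => by rw [← htv]
  -- split off top coefficient
  set A : R := ∑ j ∈ Finset.range q, ((p.choose (j + 1) / p : ℕ) : R) * v ^ j with hA
  have hsplit : bottTheta p N = (p : R) * A + v ^ q := by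
    rw [htheta, show Finset.range p = Finset.range (q + 1) by rw [hpq],
      Finset.sum_range_succ]
    have hcq : (p.choose (q + 1) : R) = 1 := by
      rw [← hpq, Nat.choose_self, Nat.cast_one]
    rw [hcq, one_mul, hA, Finset.mul_sum]
    congr 1
    refine Finset.sum_congr rfl fun j hj => ?_
    have hj' : j < q := Finset.mem_range.mp hj
    have hd : p ∣ p.choose (j + 1) :=
      Nat.Prime.dvd_choose_self hp (by omega) (by omega)
    rw [← mul_assoc, ← Nat.cast_mul, Nat.mul_div_cancel' hd]
  -- A is a unit
  have hA1 : A - 1 = v * ∑ j ∈ Finset.range (q - 1), ((p.choose (j + 2) / p : ℕ) : R) * v ^ j := by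
    have hq1 : q = (q - 1) + 1 := by omega
    rw [hA, hq1, Finset.sum_range_succ']
    have h0 : ((p.choose (0 + 1) / p : ℕ) : R) * v ^ 0 = 1 := by
      simp [Nat.choose_one_right, Nat.div_self (by omega : 0 < p)]
    rw [h0, add_sub_cancel_right, Finset.mul_sum]
    exact Finset.sum_congr rfl fun j hj => by ring
  have hAunit : IsUnit A := by
    have : IsNilpotent (A - 1) := by
      rw [hA1]; exact (Commute.all _ _).isNilpotent_mul_right hvnil
    have h := this.isUnit_one_add
    rwa [show (1 : R) + (A - 1) = A by ring] at h
  set Ai := Ring.inverse A with hAi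
  have hAiA : A * Ai = 1 := Ring.mul_inverse_cancel _ hAunit
  set w := Ai * v ^ q with hw
  have hwnil : w ^ (m + 1) = 0 := by
    rw [hw, mul_pow, ← pow_mul, hvpow (q * (m + 1)) hmN, mul_zero]
  have hfac : bottTheta p N = A * ((p : R) + w) := by
    have hAw : A * w = v ^ q := by rw [hw, ← mul_assoc, hAiA, one_mul]
    rw [hsplit]; linear_combination -hAw
  have hgeom : ((p : R) + w) * (∑ i ∈ Finset.range (m + 1), (p : R) ^ i * (-w) ^ (m - i))
      = (p : R) ^ (m + 1) := by
    have hnw : (-w) ^ (m + 1) = 0 := by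
      rw [show -w = (-1 : R) * w from by ring, mul_pow, hwnil, mul_zero]
    have h := geom_sum₂_mul (p : R) (-w) (m + 1)
    simp only [Nat.add_sub_cancel] at h
    rw [hnw, sub_zero, sub_neg_eq_add] at h
    linear_combination h
  -- the elements e k
  set e : ℕ → R := fun k => Ai * (-w) ^ k with he
  have hek : ∀ k, e k = ((-1) ^ k * Ai ^ (k + 1) * t ^ (q * k)) * c ^ (k * q) := by
    intro k
    simp only [he]
    rw [hw, show -(Ai * v ^ q) = (-1 : R) * (Ai * v ^ q) from by ring,
      mul_pow, mul_pow, ← pow_mul, hvc, mul_pow, mul_comm k q]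
    ring
  -- main identity in R
  have hsum : ∑ k ∈ Finset.range (m + 1), (p : R) ^ (m - k) * e k
      = Ai * ∑ i ∈ Finset.range (m + 1), (p : R) ^ i * (-w) ^ (m - i) := by
    rw [Finset.mul_sum,
      ← Finset.sum_range_reflect (fun i => Ai * ((p : R) ^ i * (-w) ^ (m - i))) (m + 1)]
    refine Finset.sum_congr rfl fun k hk => ?_
    have hk' : k ≤ m := by have := Finset.mem_range.mp hk; omega
    have h1 : m + 1 - 1 - k = m - k := by omega
    have h2 : m - (m - k) = k := by omega
    simp only [he]
    rw [h1, h2]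
    ring
  have hmain : bottTheta p N * (∑ k ∈ Finset.range (m + 1), (p : R) ^ (m - k) * e k)
      = (p : R) ^ (m + 1) := by
    rw [hsum, hfac]
    calc A * ((p : R) + w) * (Ai * ∑ i ∈ Finset.range (m + 1), (p : R) ^ i * (-w) ^ (m - i))
        = (A * Ai) * (((p : R) + w) * ∑ i ∈ Finset.range (m + 1), (p : R) ^ i * (-w) ^ (m - i)) := by
          ring
      _ = (p : R) ^ (m + 1) := by rw [hAiA, one_mul, hgeom]
  -- conclude
  refine ⟨e, ?_, ?_, ⟨∑ k ∈ Finset.range (m + 1), (p : R) ^ (m - k) * e k, ?_⟩⟩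
  · intro k hk
    refine Ideal.mem_span_singleton.mpr ⟨(-1) ^ k * Ai ^ (k + 1) * t ^ (q * k), ?_⟩
    rw [hek k]; ring
  · have h2 := congrArg (algebraMap R (Localization.Away ((p : R)))) hmain
    rw [map_mul, map_pow, map_natCast] at h2
    have hS : (algebraMap R (Localization.Away ((p : R))))
          (∑ k ∈ Finset.range (m + 1), (p : R) ^ (m - k) * e k)
        = ∑ k ∈ Finset.range (m + 1),
            (p : Localization.Away ((p : R))) ^ (m - k) *
              (algebraMap R (Localization.Away ((p : R)))) (e k) := by
      rw [map_sum]
      exact Finset.sum_congr rfl fun k _ => by rw [map_mul, map_pow, map_natCast]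
    rw [hS] at h2
    exact h2
  · have h3 := congrArg (algebraMap R (Localization.Away ((p : R)))) hmain
    rw [map_mul, map_pow, map_natCast] at h3
    exact h3
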